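/- The vector Φe₀ has coordinates ⟨Φe₀, e_n⟩ = i·(−1)^n/n for n ≥ 1 and ⟨Φe₀, e₀⟩ = 0 (so Φe₀ corresponds to the boundary function of −i·log(1+z)), and Φe₀ ∉ D(N); equivalently, e₀ ∉ D(NΦ). -/

import Mathlib

noncomputable section

open MeasureTheory Complex Real AddCircle ContinuousLinearMap
open scoped ENNReal NNReal

namespace GW

/-- The Hilbert space `H = ℓ²(ℕ, ℂ)`. -/
abbrev H : Type := lp (fun _ : ℕ => ℂ) 2

instance fact2pi : Fact (0 < 2 * Real.pi) := ⟨by positivity⟩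

/-- The circle `𝕋`, realized as `ℝ / 2πℤ`; the point `θ` corresponds to `e^{iθ}`. -/
abbrev Circle2 : Type := AddCircle (2 * Real.pi)

/-- Normalized Lebesgue (Haar) measure `dθ/2π` on the circle. -/
abbrev μT : Measure Circle2 := @AddCircle.haarAddCircle (2 * Real.pi) fact2pi

/-- `L²(𝕋)` with respect to normalized Lebesgue measure. -/
abbrev L2T : Type := MeasureTheory.Lp ℂ 2 μT

/-- Extension of an `ℕ`-indexed coefficient sequence to `ℤ` by zero. -/
def extz (f : ℕ → ℂ) : ℤ → ℂ := fun n => if 0 ≤ n then f n.toNat else 0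

lemma extz_natCast (f : ℕ → ℂ) (n : ℕ) : extz f (n : ℤ) = f n := by
  simp [extz]

lemma extz_memℓp (f : H) : Memℓp (extz ⇑f) 2 := by
  apply memℓp_gen
  have hs : Summable fun n : ℕ => ‖(⇑f) n‖ ^ (2 : ℝ≥0∞).toReal :=
    (lp.memℓp f).summable (by norm_num)
  have h0 : ∀ z : ℤ, z ∉ Set.range ((↑·) : ℕ → ℤ) →
      ‖extz ⇑f z‖ ^ (2 : ℝ≥0∞).toReal = 0 := by
    intro z hz
    have hneg : ¬ (0 : ℤ) ≤ z := fun h => hz ⟨z.toNat, by simpa using Int.toNat_of_nonneg h⟩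
    simp only [extz, if_neg hneg, norm_zero]
    rw [Real.zero_rpow (by norm_num)]
  have hinj : Function.Injective ((↑·) : ℕ → ℤ) := fun a b h => by simpa using h
  refine (hinj.summable_iff h0).mp ?_
  refine hs.congr fun n => ?_
  simp [Function.comp, extz_natCast]

/-- The zero-extension `ℓ²(ℕ,ℂ) → ℓ²(ℤ,ℂ)`. -/
def extlp (f : H) : lp (fun _ : ℤ => ℂ) 2 := ⟨extz ⇑f, extz_memℓp f⟩

/-- `J` as a plain function: send `(c_n)_{n∈ℕ}` to `Σ_{n∈ℕ} c_n e^{inθ}` in `L²(𝕋)`,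
via the Fourier Hilbert basis of `L²(𝕋)`. -/
def Jmap (f : H) : L2T := (@fourierBasis (2 * Real.pi) fact2pi).repr.symm (extlp f)

lemma extlp_add (f g : H) : extlp (f + g) = extlp f + extlp g := by
  apply Subtype.ext
  funext n
  show extz (⇑(f + g)) n = extz ⇑f n + extz ⇑g n
  rcases le_or_gt 0 n with h | h
  · simp only [extz, if_pos h]
    exact congrFun (lp.coeFn_add f g) n.toNat
  · simp [extz, if_neg (not_le.mpr h)]

lemma extlp_smul (c : ℂ) (f : H) : extlp (c • f) = c • extlp f := by
  apply Subtype.ext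
  funext n
  show extz (⇑(c • f)) n = c • extz ⇑f n
  rcases le_or_gt 0 n with h | h
  · simp only [extz, if_pos h]
    rw [lp.coeFn_smul]
    rfl
  · simp [extz, if_neg (not_le.mpr h)]

/-- `J` as a linear map. -/
def Jlin : H →ₗ[ℂ] L2T where
  toFun := Jmap
  map_add' f g := show Jmap (f + g) = Jmap f + Jmap g by
    unfold Jmap; rw [extlp_add, map_add]
  map_smul' c f := show Jmap (c • f) = c • Jmap f by
    unfold Jmap; rw [extlp_smul, _root_.map_smul]

lemma norm_extlp (f : H) : ‖extlp f‖ = ‖f‖ := by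
  rw [lp.norm_eq_tsum_rpow (by norm_num : 0 < (2 : ℝ≥0∞).toReal) (extlp f),
    lp.norm_eq_tsum_rpow (by norm_num : 0 < (2 : ℝ≥0∞).toReal) f]
  congr 1
  have hinj : Function.Injective ((↑·) : ℕ → ℤ) := fun a b h => by simpa using h
  have h0 : ∀ z, z ∉ Set.range ((↑·) : ℕ → ℤ) →
      ‖extlp f z‖ ^ (2 : ℝ≥0∞).toReal = 0 := by
    intro z hz
    have hneg : ¬ (0 : ℤ) ≤ z := fun h => hz ⟨z.toNat, by simpa using Int.toNat_of_nonneg h⟩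
    show ‖extz ⇑f z‖ ^ (2 : ℝ≥0∞).toReal = 0
    simp only [extz, if_neg hneg, norm_zero]
    rw [Real.zero_rpow (by norm_num)]
  have hsupp : (Function.support fun z => ‖extlp f z‖ ^ (2 : ℝ≥0∞).toReal) ⊆
      Set.range ((↑·) : ℕ → ℤ) := by
    intro z hz
    by_contra h
    exact hz (h0 z h)
  have key := hinj.tsum_eq (f := fun z => ‖extlp f z‖ ^ (2 : ℝ≥0∞).toReal) hsupp
  rw [← key]
  exact tsum_congr fun n => by
    show ‖extz ⇑f (n : ℤ)‖ ^ (2 : ℝ≥0∞).toReal = _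
    rw [extz_natCast]

/-- The isometric embedding `J : H → L²(𝕋)` as a continuous linear map; it maps the `n`-th
standard basis vector of `ℓ²(ℕ,ℂ)` to `θ ↦ e^{inθ}`, `n ∈ ℕ`. -/
def JH : H →L[ℂ] L2T :=
  LinearMap.mkContinuousOfExistsBound Jlin
    ⟨1, fun f => by
      simp only [Jlin, LinearMap.coe_mk, AddHom.coe_mk, one_mul, Jmap]
      rw [LinearIsometryEquiv.norm_map]
      exact le_of_eq (norm_extlp f)⟩

end GW

namespace GW

/-- The argument function on the circle: `e^{iθ} ↦ θ` with `θ ∈ (−π, π]`, as a `ℂ`-valued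
function. -/
def argFun : Circle2 → ℂ :=
  fun x => (((AddCircle.measurableEquivIoc (2 * Real.pi) (-Real.pi) x : Set.Ioc (-Real.pi) (-Real.pi + 2 * Real.pi)) : ℝ) : ℂ)

lemma argFun_memℒp : MemLp argFun ⊤ μT := by
  apply memLp_top_of_bound (C := Real.pi)
  · exact (Complex.measurable_ofReal.comp (measurable_subtype_coe.comp
      (AddCircle.measurableEquivIoc (2 * Real.pi) (-Real.pi)).measurable)).aestronglyMeasurable
  · refine Filter.Eventually.of_forall fun x => ?_
    have h := (AddCircle.measurableEquivIoc (2 * Real.pi) (-Real.pi) x).2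
    have h1 : -Real.pi < ((AddCircle.measurableEquivIoc (2 * Real.pi) (-Real.pi) x : Set.Ioc (-Real.pi) (-Real.pi + 2 * Real.pi)) : ℝ) := h.1
    have h2 := h.2
    rw [argFun, Complex.norm_real, Real.norm_eq_abs, abs_le]
    constructor
    · linarith
    · linarith

lemma mul_memℒp (φ : Circle2 → ℂ) (hφ : MemLp φ ⊤ μT) (f : L2T) : MemLp (φ • ⇑f) 2 μT :=
  (Lp.memLp f).smul (p := ⊤) hφ

lemma mul_toLp_add (φ : Circle2 → ℂ) (hφ : MemLp φ ⊤ μT) (f g : L2T) :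
    (mul_memℒp φ hφ (f + g)).toLp (φ • ⇑(f + g)) =
      (mul_memℒp φ hφ f).toLp (φ • ⇑f) + (mul_memℒp φ hφ g).toLp (φ • ⇑g) := by
  rw [MemLp.toLp_congr (mul_memℒp φ hφ (f + g)) ((mul_memℒp φ hφ f).add (mul_memℒp φ hφ g))
    ((Lp.coeFn_add f g).mono fun x hx => by
      simp only [Pi.smul_apply', hx, Pi.add_apply, smul_add])]
  exact MemLp.toLp_add _ _

lemma mul_toLp_smul (φ : Circle2 → ℂ) (hφ : MemLp φ ⊤ μT) (c : ℂ) (f : L2T) :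
    (mul_memℒp φ hφ (c • f)).toLp (φ • ⇑(c • f)) = c • (mul_memℒp φ hφ f).toLp (φ • ⇑f) := by
  rw [MemLp.toLp_congr (mul_memℒp φ hφ (c • f)) ((mul_memℒp φ hφ f).const_smul c)
    ((Lp.coeFn_smul c f).mono fun x hx => by
      rw [Pi.smul_apply', hx, Pi.smul_apply, Pi.smul_apply, Pi.smul_apply', smul_comm])]
  exact MemLp.toLp_const_smul c _

/-- Multiplication by a bounded measurable function, as a linear map on `L²(𝕋)`. -/
def mulLin (φ : Circle2 → ℂ) (hφ : MemLp φ ⊤ μT) : L2T →ₗ[ℂ] L2T where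
  toFun f := (mul_memℒp φ hφ f).toLp (φ • ⇑f)
  map_add' f g := mul_toLp_add φ hφ f g
  map_smul' c f := mul_toLp_smul φ hφ c f

/-- Multiplication by a bounded measurable function, as a bounded operator on `L²(𝕋)`. -/
def mulCLM (φ : Circle2 → ℂ) (hφ : MemLp φ ⊤ μT) : L2T →L[ℂ] L2T :=
  LinearMap.mkContinuousOfExistsBound (mulLin φ hφ)
    ⟨(eLpNorm φ ⊤ μT).toReal, fun f => by
      simp only [mulLin, LinearMap.coe_mk, AddHom.coe_mk]
      rw [Lp.norm_toLp, Lp.norm_def]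
      rw [← ENNReal.toReal_mul]
      apply ENNReal.toReal_mono
      · exact ENNReal.mul_ne_top hφ.eLpNorm_ne_top (Lp.memLp f).eLpNorm_ne_top
      · exact eLpNorm_smul_le_mul_eLpNorm (p := ⊤) (q := 2) (r := 2) (Lp.memLp f).1 hφ.1⟩

/-- The Garrison–Wong phase operator `Φ = J* ∘ M_arg ∘ J` on `H`. -/
def Phi : H →L[ℂ] H :=
  (ContinuousLinearMap.adjoint JH) ∘L (mulCLM argFun argFun_memℒp) ∘L JH

/-- The domain of the number operator: `{f ∈ H : Σ n² |c_n|² < ∞}`. -/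
def domN : Set H := {f : H | Summable fun n : ℕ => (n : ℝ) ^ 2 * ‖f n‖ ^ 2}

lemma Nop_memℓp {f : H} (hf : f ∈ domN) : Memℓp (fun n : ℕ => (n : ℂ) * f n) 2 := by
  apply memℓp_gen
  refine Summable.congr hf fun n => ?_
  have h2 : ((2 : ℝ≥0∞)).toReal = ((2 : ℕ) : ℝ) := by norm_num
  rw [h2, Real.rpow_natCast]
  simp [norm_mul, mul_pow]

/-- The number operator `N`, defined on its maximal domain `domN`: `(Nf)_n = n·c_n`. -/
def Nop (f : H) (hf : f ∈ domN) : H := ⟨fun n : ℕ => (n : ℂ) * f n, Nop_memℓp hf⟩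

/-- The standard orthonormal basis `(e_n)` of `H`. -/
def eH (n : ℕ) : H := lp.single 2 n (1 : ℂ)

lemma norm_exp_mul (x : ℝ) (c : ℂ) : ‖Complex.exp ((x : ℂ) * Complex.I) * c‖ = ‖c‖ := by
  rw [norm_mul, Complex.norm_exp_ofReal_mul_I, one_mul]

lemma U_memℓp (t : ℝ) (f : H) : Memℓp (fun n : ℕ => Complex.exp (((n * t : ℝ) : ℂ) * Complex.I) * f n) 2 := by
  apply memℓp_gen
  refine Summable.congr ((lp.memℓp f).summable (by norm_num)) fun n => ?_
  rw [norm_exp_mul]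

/-- The unitary group `U_t = e^{itN}`: `(U_t f)_n = e^{int} f_n`, as a linear map. -/
def Ulin (t : ℝ) : H →ₗ[ℂ] H where
  toFun f := ⟨fun n : ℕ => Complex.exp (((n * t : ℝ) : ℂ) * Complex.I) * f n, U_memℓp t f⟩
  map_add' f g := by
    apply Subtype.ext
    funext n
    show Complex.exp _ * (⇑(f + g)) n = _
    rw [lp.coeFn_add]
    show Complex.exp _ * (f n + g n) =
      Complex.exp _ * f n + Complex.exp _ * g n
    ring
  map_smul' c f := by
    apply Subtype.ext
    funext n
    show Complex.exp _ * (⇑(c • f)) n = _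
    rw [lp.coeFn_smul]
    show Complex.exp _ * (c * f n) = c * (Complex.exp _ * f n)
    ring

/-- The unitary group `U_t = e^{itN}`: `(U_t f)_n = e^{int} f_n`. -/
def U (t : ℝ) : H →L[ℂ] H :=
  LinearMap.mkContinuousOfExistsBound (Ulin t)
    ⟨1, fun f => by
      simp only [Ulin, LinearMap.coe_mk, AddHom.coe_mk, one_mul]
      apply le_of_eq
      rw [lp.norm_eq_tsum_rpow (by norm_num : 0 < (2 : ℝ≥0∞).toReal),
        lp.norm_eq_tsum_rpow (by norm_num : 0 < (2 : ℝ≥0∞).toReal) f]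
      congr 1
      refine tsum_congr fun n => ?_
      show ‖Complex.exp (((n * t : ℝ) : ℂ) * Complex.I) * f n‖ ^ (2 : ℝ≥0∞).toReal = _
      rw [norm_exp_mul]⟩

/-- The indicator function of a subset of the circle, as a `ℂ`-valued function. -/
def indFun (B : Set Circle2) : Circle2 → ℂ := Set.indicator B (fun _ => (1 : ℂ))

lemma indFun_memℒp {B : Set Circle2} (hB : MeasurableSet B) : MemLp (indFun B) ⊤ μT := by
  apply memLp_top_of_bound (C := 1)
  · exact (aestronglyMeasurable_const.indicator hB)
  · refine Filter.Eventually.of_forall fun x => ?_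
    by_cases h : x ∈ B <;> simp [indFun, h]

open scoped Classical in
/-- The POVM `Q(B) = J* ∘ M_{1_B} ∘ J` obtained by compressing multiplication by the
indicator of `B` to `H` (defined to be `0` for non-measurable `B`). -/
def Qop (B : Set Circle2) : H →L[ℂ] H :=
  if h : MeasurableSet B then
    (ContinuousLinearMap.adjoint JH) ∘L (mulCLM (indFun B) (indFun_memℒp h)) ∘L JH
  else 0



/-! ### Auxiliary lemmas for Statement 8 -/

lemma argFun_eq_liftIoc :
    argFun = AddCircle.liftIoc (2 * Real.pi) (-Real.pi) (fun x : ℝ => (x : ℂ)) := rfl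

lemma exp_deriv_aux (c : ℂ) (hc : c ≠ 0) (x : ℝ) :
    HasDerivAt (fun y : ℝ => Complex.exp (c * y) * ((y : ℂ) / c - 1 / c ^ 2))
      (Complex.exp (c * x) * x) x := by
  have h1 : HasDerivAt (fun y : ℝ => Complex.exp (c * y)) (Complex.exp (c * x) * c) x := by
    have h := ((Complex.hasDerivAt_exp (c * x)).comp x
      (((hasDerivAt_id (x : ℂ)).const_mul c).comp_ofReal))
    simp only [id, mul_one] at h
    exact h
  have h2 : HasDerivAt (fun y : ℝ => ((y : ℂ) / c - 1 / c ^ 2)) (1 / c) x := by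
    have h := (((hasDerivAt_id (x : ℂ)).div_const c).comp_ofReal).sub_const (1 / c ^ 2)
    exact h
  have h := h1.mul h2
  refine h.congr_deriv ?_
  field_simp
  ring

lemma neg_one_zpow_mul_self (n : ℤ) : ((-1 : ℂ)) ^ n * ((-1 : ℂ)) ^ n = 1 := by
  rw [← zpow_add₀ (by norm_num : (-1 : ℂ) ≠ 0), show n + n = 2 * n by ring, zpow_mul]
  norm_num

lemma neg_one_zpow_neg (n : ℤ) : ((-1 : ℂ)) ^ (-n) = ((-1 : ℂ)) ^ n := by
  rw [zpow_neg]
  exact inv_eq_of_mul_eq_one_left (neg_one_zpow_mul_self n)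

lemma fourierCoeff_argFun_ne (n : ℤ) (hn : n ≠ 0) :
    fourierCoeff argFun n = Complex.I * (-1 : ℂ) ^ n / n := by
  have hπ : (Real.pi : ℂ) ≠ 0 := by exact_mod_cast Real.pi_ne_zero
  have hnc : (n : ℂ) ≠ 0 := Int.cast_ne_zero.mpr hn
  set c : ℂ := -(n : ℂ) * Complex.I with hc_def
  have hc : c ≠ 0 := by
    simp only [hc_def, mul_ne_zero_iff, neg_ne_zero]
    exact ⟨hnc, Complex.I_ne_zero⟩
  rw [argFun_eq_liftIoc, fourierCoeff_liftIoc_eq, fourierCoeffOn_eq_integral]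
  have hcongr : ∫ x in (-Real.pi)..(-Real.pi + 2 * Real.pi),
      fourier (-n) (x : AddCircle ((-Real.pi + 2 * Real.pi) - (-Real.pi))) • ((x : ℝ) : ℂ)
      = ∫ x in (-Real.pi)..(-Real.pi + 2 * Real.pi), Complex.exp (c * x) * x := by
    refine intervalIntegral.integral_congr fun x hx => ?_
    rw [fourier_coe_apply, smul_eq_mul]
    congr 2
    rw [show ((-Real.pi + 2 * Real.pi) - (-Real.pi) : ℝ) = 2 * Real.pi by ring]
    push_cast
    field_simp
    ring
  rw [hcongr]
  have hInt : IntervalIntegrable (fun x : ℝ => Complex.exp (c * x) * x) MeasureTheory.volume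
      (-Real.pi) (-Real.pi + 2 * Real.pi) := by
    apply Continuous.intervalIntegrable
    exact (Complex.continuous_exp.comp (continuous_const.mul Complex.continuous_ofReal)).mul
      Complex.continuous_ofReal
  rw [intervalIntegral.integral_eq_sub_of_hasDerivAt (fun x _ => exp_deriv_aux c hc x) hInt]
  have h1 : Complex.exp (c * ((-Real.pi + 2 * Real.pi : ℝ) : ℂ)) = (-1 : ℂ) ^ n := by
    rw [show c * ((-Real.pi + 2 * Real.pi : ℝ) : ℂ) = ((-n : ℤ) : ℂ) * (Real.pi * Complex.I) by
      push_cast; ring, Complex.exp_int_mul, Complex.exp_pi_mul_I, neg_one_zpow_neg]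
  have h2 : Complex.exp (c * ((-Real.pi : ℝ) : ℂ)) = (-1 : ℂ) ^ n := by
    rw [show c * ((-Real.pi : ℝ) : ℂ) = ((n : ℤ) : ℂ) * (Real.pi * Complex.I) by
      push_cast; ring, Complex.exp_int_mul, Complex.exp_pi_mul_I]
  rw [h1, h2, Complex.real_smul]
  have hm := neg_one_zpow_mul_self n
  have hI := Complex.I_mul_I
  have hI4 : (Complex.I : ℂ) ^ 4 = 1 := by
    rw [show (4 : ℕ) = 2 * 2 from rfl, pow_mul, Complex.I_sq]
    norm_num
  push_cast
  field_simp
  ring_nf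
  rw [hc_def]
  linear_combination (-2 * (Real.pi : ℂ) * (n : ℂ) ^ 2 * Complex.I) * hI

lemma fourierCoeff_argFun_zero : fourierCoeff argFun 0 = 0 := by
  rw [argFun_eq_liftIoc, fourierCoeff_liftIoc_eq, fourierCoeffOn_eq_integral]
  simp only [neg_zero, fourier_zero, one_smul]
  rw [intervalIntegral.integral_ofReal, integral_id,
    show ((-Real.pi + 2 * Real.pi) ^ 2 - (-Real.pi) ^ 2) / 2 = 0 by ring]
  simp

lemma fourierCoeff_congr_ae {f g : Circle2 → ℂ} (h : f =ᵐ[μT] g) (n : ℤ) :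
    fourierCoeff f n = fourierCoeff g n := by
  unfold fourierCoeff
  exact integral_congr_ae (h.mono fun x hx => by simp only [hx])

lemma extlp_eH (k : ℕ) : extlp (eH k) = lp.single 2 (k : ℤ) (1 : ℂ) := by
  apply Subtype.ext
  funext z
  show extz (⇑(eH k)) z = _
  rcases le_or_gt 0 z with h | h
  · simp only [extz, if_pos h, eH]
    rw [lp.single_apply, lp.single_apply]
    by_cases hk : z = (k : ℤ)
    · subst hk
      simp
    · have hk' : z.toNat ≠ k := fun hh => hk (by rw [← hh, Int.toNat_of_nonneg h])
      rw [Pi.single_apply, Pi.single_apply, if_neg hk, if_neg hk']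
  · simp only [extz, if_neg (not_le.mpr h), eH]
    have hzk : z ≠ (k : ℤ) := fun hh => absurd (hh ▸ h) (Int.natCast_nonneg k).not_gt
    rw [lp.single_apply, Pi.single_apply, if_neg hzk]

lemma JH_eH (k : ℕ) : JH (eH k) = (@fourierBasis (2 * Real.pi) fact2pi) (k : ℤ) := by
  show Jmap (eH k) = _
  rw [Jmap, extlp_eH]
  exact HilbertBasis.repr_symm_single _ _

lemma inner_eH_Phi (k : ℕ) :
    (inner ℂ (eH k) (Phi (eH 0)) : ℂ) = fourierCoeff argFun (k : ℤ) := by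
  rw [Phi, ContinuousLinearMap.comp_apply, ContinuousLinearMap.comp_apply,
    ContinuousLinearMap.adjoint_inner_right, JH_eH k]
  set g : L2T := mulCLM argFun argFun_memℒp (JH (eH 0)) with hg
  have hae : (⇑g : Circle2 → ℂ) =ᵐ[μT] argFun := by
    have h1 : (⇑g : Circle2 → ℂ) =ᵐ[μT] (argFun • ⇑(JH (eH 0))) :=
      MeasureTheory.MemLp.coeFn_toLp (mul_memℒp argFun argFun_memℒp (JH (eH 0)))
    have h2 : (⇑(JH (eH 0)) : Circle2 → ℂ) =ᵐ[μT] fun _ => (1 : ℂ) := by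
      rw [JH_eH 0]
      have h3 := coeFn_fourierLp (T := 2 * Real.pi) 2 (0 : ℤ)
      rw [show ((0 : ℕ) : ℤ) = (0 : ℤ) by norm_num]
      rw [coe_fourierBasis]
      refine h3.trans (Filter.Eventually.of_forall fun x => ?_)
      exact fourier_zero
    refine h1.trans ((h2.mono fun x hx => ?_))
    simp only [Pi.smul_apply, smul_eq_mul, Pi.mul_apply, hx, mul_one]
  calc (inner ℂ (fourierBasis (k : ℤ)) g : ℂ)
      = fourierBasis.repr g (k : ℤ) := (HilbertBasis.repr_apply_apply _ _ _).symm
    _ = fourierCoeff (⇑g) (k : ℤ) := fourierBasis_repr g (k : ℤ)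
    _ = fourierCoeff argFun (k : ℤ) := fourierCoeff_congr_ae hae (k : ℤ)

/-- The vector `Φe₀` has coordinates `⟨Φe₀, e_n⟩ = i·(−1)^n/n` for `n ≥ 1` and
`⟨Φe₀, e₀⟩ = 0` (so `Φe₀` is the boundary function of `−i·log(1+z)`), and `Φe₀ ∉ D(N)`,
i.e. `e₀ ∉ D(NΦ)`. (The pairing `⟨·,·⟩` of the paper is linear in its first argument, so
`⟨Φe₀, e_n⟩` is `inner ℂ (eH n) (Phi (eH 0))` in Mathlib's convention.) -/
theorem phi_e0_coords_and_not_in_domN :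
    (∀ n : ℕ, 1 ≤ n →
      (inner ℂ (eH n) (Phi (eH 0)) : ℂ) = Complex.I * (-1 : ℂ) ^ n / (n : ℂ)) ∧
    (inner ℂ (eH 0) (Phi (eH 0)) : ℂ) = 0 ∧
    Phi (eH 0) ∉ domN := by
  have hcoord : ∀ n : ℕ, 1 ≤ n →
      (inner ℂ (eH n) (Phi (eH 0)) : ℂ) = Complex.I * (-1 : ℂ) ^ n / (n : ℂ) := by
    intro n hn
    have hne : (n : ℤ) ≠ 0 := by exact_mod_cast Nat.one_le_iff_ne_zero.mp hn
    rw [inner_eH_Phi n, fourierCoeff_argFun_ne (n : ℤ) hne, zpow_natCast]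
    push_cast
    ring
  have h0 : (inner ℂ (eH 0) (Phi (eH 0)) : ℂ) = 0 := by
    rw [inner_eH_Phi 0]
    exact_mod_cast fourierCoeff_argFun_zero
  refine ⟨hcoord, h0, ?_⟩
  intro hs
  have happ : ∀ n : ℕ, 1 ≤ n → ‖(⇑(Phi (eH 0))) n‖ = 1 / n := by
    intro n hn
    have hv : (⇑(Phi (eH 0))) n = Complex.I * (-1 : ℂ) ^ n / n := by
      rw [← hcoord n hn]
      simp only [eH]
      rw [lp.inner_single_left]
      simp
    rw [hv]
    simp [norm_div, norm_mul]
  have h1 : Summable (fun n : ℕ => ((n + 1 : ℕ) : ℝ) ^ 2 * ‖(⇑(Phi (eH 0))) (n + 1)‖ ^ 2) :=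
    (summable_nat_add_iff 1).mpr hs
  have h2 : Summable (fun _ : ℕ => (1 : ℝ)) := by
    refine h1.congr fun n => ?_
    rw [happ (n + 1) (Nat.le_add_left 1 n)]
    have hne : ((n + 1 : ℕ) : ℝ) ≠ 0 := by positivity
    push_cast at hne ⊢
    field_simp
  exact one_ne_zero ((summable_const_iff (1 : ℝ)).mp h2)

end GW
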